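/- In the Loidreau–Overbeck setting, assume rk_F(λ_(n−t−k)(E)_a⃗) = t. Then the F-row space of the decoding matrix L equals the F-row space of the matrix obtained by stacking λ_(n−t−1)(β)_a⃗ on top of λ_(n−t−k)(E)_a⃗. -/

import Mathlib

namespace Stmt3

/-- `genNorm σ a i = σ^(i-1)(a) ⋯ σ(a) · a`, the generalized power function `N_i(a)`. -/
def genNorm {F : Type} [Field F] (σ : F ≃+* F) (a : F) : ℕ → F
  | 0 => 1
  | i + 1 => (⇑σ)^[i] a * genNorm σ a i

/-- Generalized operator `D_a^i(b) = σ^i(b) · N_i(a)` for `i ∈ ℕ`. -/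
def opev {F : Type} [Field F] (σ : F ≃+* F) (a b : F) (i : ℕ) : F :=
  (⇑σ)^[i] b * genNorm σ a i

/-- `b` is σ-conjugate to `a`, i.e. `b = σ(c)·a·c⁻¹` for some nonzero `c`. -/
def SConj {F : Type} [Field F] (σ : F ≃+* F) (a b : F) : Prop :=
  ∃ c : F, c ≠ 0 ∧ b = σ c * a * c⁻¹

/-- σ-generalized Moore matrix `λ_d(x)_a⃗` w.r.t. the length partition `nn`:
its row `r` applies `D_{a_i}^r` entrywise to the `i`-th block of `x`. -/
def moore {F : Type} [Field F] (σ : F ≃+* F) {ℓ : ℕ} (nn : Fin ℓ → ℕ) (aa : Fin ℓ → F)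
    (d : ℕ) (x : (Σ i : Fin ℓ, Fin (nn i)) → F) :
    Matrix (Fin d) (Σ i : Fin ℓ, Fin (nn i)) F :=
  Matrix.of fun r p => opev σ (aa p.1) (x p) (r : ℕ)

/-- `λ_d(X)_a⃗` for a matrix `X`: the stack of `λ_d(x_j)_a⃗` over the rows of `X`. -/
def mooreMat {F : Type} [Field F] (σ : F ≃+* F) {ℓ : ℕ} (nn : Fin ℓ → ℕ) (aa : Fin ℓ → F)
    {s : ℕ} (d : ℕ) (X : Matrix (Fin s) (Σ i : Fin ℓ, Fin (nn i)) F) :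
    Matrix (Fin s × Fin d) (Σ i : Fin ℓ, Fin (nn i)) F :=
  Matrix.of fun r p => opev σ (aa p.1) (X r.1 p) (r.2 : ℕ)

/-- `rk_q` of a vector: the `K`-dimension of the `K`-span of its entries. -/
noncomputable def rkq (K : Type) [Field K] {F : Type} [Field F] [Algebra K F] {ι : Type}
    (v : ι → F) : ℕ :=
  Module.finrank K (Submodule.span K (Set.range v))

/-- `rk_q` of a matrix: the `K`-dimension of the `K`-span of its columns. -/
noncomputable def rkqMat (K : Type) [Field K] {F : Type} [Field F] [Algebra K F]
    {s : ℕ} {ι : Type} (X : Matrix (Fin s) ι F) : ℕ :=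
  Module.finrank K (Submodule.span K (Set.range fun j : ι => fun r : Fin s => X r j))

/-- Sum-rank weight of a blockwise vector. -/
noncomputable def wtV (K : Type) [Field K] {F : Type} [Field F] [Algebra K F] {ℓ : ℕ}
    (nn : Fin ℓ → ℕ) (x : (Σ i : Fin ℓ, Fin (nn i)) → F) : ℕ :=
  ∑ i, rkq K fun μ : Fin (nn i) => x ⟨i, μ⟩

/-- Sum-rank weight of a blockwise matrix. -/
noncomputable def wtM (K : Type) [Field K] {F : Type} [Field F] [Algebra K F] {s ℓ : ℕ}
    (nn : Fin ℓ → ℕ) (X : Matrix (Fin s) (Σ i : Fin ℓ, Fin (nn i)) F) : ℕ :=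
  ∑ i, rkqMat K (Matrix.of fun (r : Fin s) (μ : Fin (nn i)) => X r ⟨i, μ⟩)

/-- Codeword `C(M) = M · λ_k(β)_a⃗` of the `s`-interleaved linearized Reed–Solomon code. -/
def codeword {F : Type} [Field F] (σ : F ≃+* F) {ℓ : ℕ} (nn : Fin ℓ → ℕ) (aa : Fin ℓ → F)
    (β : (Σ i : Fin ℓ, Fin (nn i)) → F) {s : ℕ} (k : ℕ) (M : Matrix (Fin s) (Fin k) F) :
    Matrix (Fin s) (Σ i : Fin ℓ, Fin (nn i)) F :=
  M * moore σ nn aa k β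

/-- Loidreau–Overbeck decoding matrix: the stack of `λ_{n-t-1}(β)_a⃗` and
`λ_{n-t-k}(r_j)_a⃗` for the rows `r_j` of `R`. -/
def LOmat {F : Type} [Field F] (σ : F ≃+* F) {ℓ : ℕ} (nn : Fin ℓ → ℕ) (aa : Fin ℓ → F)
    (β : (Σ i : Fin ℓ, Fin (nn i)) → F) {s : ℕ}
    (R : Matrix (Fin s) (Σ i : Fin ℓ, Fin (nn i)) F) (n t k : ℕ) :
    Matrix (Fin (n - t - 1) ⊕ Fin s × Fin (n - t - k)) (Σ i : Fin ℓ, Fin (nn i)) F :=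
  Matrix.of fun r p =>
    match r with
    | Sum.inl u => opev σ (aa p.1) (β p) (u : ℕ)
    | Sum.inr ju => opev σ (aa p.1) (R ju.1 p) (ju.2 : ℕ)

lemma iter_add {F : Type} [Field F] (σ : F ≃+* F) (u : ℕ) (x y : F) :
    (⇑σ)^[u] (x + y) = (⇑σ)^[u] x + (⇑σ)^[u] y := by
  induction u generalizing x y with
  | zero => simp
  | succ n ih => simp [Function.iterate_succ_apply, map_add, ih]

lemma iter_mul {F : Type} [Field F] (σ : F ≃+* F) (u : ℕ) (x y : F) :
    (⇑σ)^[u] (x * y) = (⇑σ)^[u] x * (⇑σ)^[u] y := by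
  induction u generalizing x y with
  | zero => simp
  | succ n ih => simp [Function.iterate_succ_apply, map_mul, ih]

lemma iter_sum {F : Type} [Field F] (σ : F ≃+* F) (u : ℕ) {ι : Type} (s : Finset ι)
    (f : ι → F) : (⇑σ)^[u] (∑ c ∈ s, f c) = ∑ c ∈ s, (⇑σ)^[u] (f c) := by
  classical
  induction s using Finset.induction with
  | empty => simp
  | insert _ _ h ih => simp [Finset.sum_insert h, iter_add, ih]

lemma genNorm_add {F : Type} [Field F] (σ : F ≃+* F) (a : F) (u c : ℕ) :
    genNorm σ a (u + c) = (⇑σ)^[u] (genNorm σ a c) * genNorm σ a u := by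
  induction c with
  | zero => simp [genNorm]
  | succ c ih =>
      have h1 : u + (c + 1) = (u + c) + 1 := by omega
      rw [h1]
      show (⇑σ)^[u + c] a * genNorm σ a (u + c) = _
      rw [ih]
      show _ = (⇑σ)^[u] ((⇑σ)^[c] a * genNorm σ a c) * genNorm σ a u
      rw [iter_mul, ← Function.iterate_add_apply]
      ring

lemma opev_shift {F : Type} [Field F] (σ : F ≃+* F) (a b : F) (u c : ℕ) :
    (⇑σ)^[u] (opev σ a b c) * genNorm σ a u = opev σ a b (u + c) := by
  simp only [opev, iter_mul, genNorm_add, ← Function.iterate_add_apply]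
  ring

/-- Row decomposition: a row of `λ(R)` is the corresponding row of `λ(E)` plus an
`F`-linear combination of Moore rows of `β`. -/
lemma row_decomp {F : Type} [Field F] (σ : F ≃+* F) {ℓ : ℕ} (nn : Fin ℓ → ℕ)
    (aa : Fin ℓ → F) (β : (Σ i : Fin ℓ, Fin (nn i)) → F) {s k : ℕ}
    (M : Matrix (Fin s) (Fin k) F)
    (E R : Matrix (Fin s) (Σ i : Fin ℓ, Fin (nn i)) F)
    (hR : R = codeword σ nn aa β k M + E)
    (j : Fin s) (u : ℕ) (p : Σ i : Fin ℓ, Fin (nn i)) :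
    opev σ (aa p.1) (R j p) u =
      opev σ (aa p.1) (E j p) u
        + ∑ c : Fin k, (⇑σ)^[u] (M j c) * opev σ (aa p.1) (β p) (u + c) := by
  subst hR
  simp only [codeword, Matrix.add_apply, Matrix.mul_apply, moore, Matrix.of_apply]
  simp only [opev, iter_add, iter_sum, iter_mul, add_mul, Finset.sum_mul]
  rw [add_comm]
  congr 1
  refine Finset.sum_congr rfl fun c _ => ?_
  rw [genNorm_add σ (aa p.1) u (c : ℕ), ← Function.iterate_add_apply]
  ring

/-- Row space of the Loidreau–Overbeck decoding matrix.
If `rk_F(λ_{n−t−k}(E)_a⃗) = t`, then the `F`-row space of the decoding matrix `L`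
equals the `F`-row space of the stack of `λ_{n−t−1}(β)_a⃗` on top of `λ_{n−t−k}(E)_a⃗`. -/
theorem LO_rowspace_eq
    {K F : Type} [Field K] [Field F] [Algebra K F] [Fintype K] [Fintype F]
    (σ : F ≃+* F)
    (hfix : ∀ x : F, σ x = x ↔ x ∈ Set.range (algebraMap K F))
    {ℓ : ℕ} (hℓ : 1 ≤ ℓ) (nn : Fin ℓ → ℕ) (aa : Fin ℓ → F)
    (ha0 : ∀ i, aa i ≠ 0)
    (haconj : ∀ i j : Fin ℓ, i ≠ j → ¬ SConj σ (aa i) (aa j))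
    (β : (Σ i : Fin ℓ, Fin (nn i)) → F)
    (hβ : ∀ i, LinearIndependent K fun μ : Fin (nn i) => β ⟨i, μ⟩)
    {s : ℕ} (hs : 1 ≤ s) {k n t : ℕ} (hn : n = ∑ i, nn i)
    (hk : 1 ≤ k) (hkn : k ≤ n)
    (M : Matrix (Fin s) (Fin k) F)
    (E R : Matrix (Fin s) (Σ i : Fin ℓ, Fin (nn i)) F)
    (hR : R = codeword σ nn aa β k M + E)
    (ht : wtM K nn E = t) (htnk : t ≤ n - k)
    (hrk : (mooreMat σ nn aa (n - t - k) E).rank = t)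
    :
    Submodule.span F (Set.range fun r => LOmat σ nn aa β R n t k r)
      = Submodule.span F (Set.range fun r => LOmat σ nn aa β E n t k r) := by
  have hktn : k + t ≤ n := by omega
  -- index bound for the shifted Moore rows
  have hidx : ∀ (u : Fin (n - t - k)) (c : Fin k), (u : ℕ) + (c : ℕ) < n - t - 1 := by
    intro u c
    have hu := u.isLt
    have hc := c.isLt
    omega
  -- the inl rows agree
  have hinl : ∀ u : Fin (n - t - 1),
      LOmat σ nn aa β R n t k (Sum.inl u) = LOmat σ nn aa β E n t k (Sum.inl u) := by
    intro u; rfl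
  -- decomposition of the inr rows
  have hdec : ∀ ju : Fin s × Fin (n - t - k),
      LOmat σ nn aa β R n t k (Sum.inr ju) =
        LOmat σ nn aa β E n t k (Sum.inr ju)
          + ∑ c : Fin k, (⇑σ)^[(ju.2 : ℕ)] (M ju.1 c) •
              LOmat σ nn aa β E n t k (Sum.inl ⟨(ju.2 : ℕ) + (c : ℕ), hidx ju.2 c⟩) := by
    intro ju
    funext p
    have h := row_decomp σ nn aa β M E R hR ju.1 (ju.2 : ℕ) p
    simp only [LOmat, Matrix.of_apply, Finset.sum_apply, Pi.add_apply, Pi.smul_apply,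
      smul_eq_mul]
    exact h
  apply le_antisymm <;> rw [Submodule.span_le] <;> rintro _ ⟨r, rfl⟩
  · cases r with
    | inl u =>
        exact Submodule.subset_span ⟨Sum.inl u, rfl⟩
    | inr ju =>
        show LOmat σ nn aa β R n t k (Sum.inr ju) ∈ _
        rw [hdec ju]
        refine Submodule.add_mem _ (Submodule.subset_span ⟨Sum.inr ju, rfl⟩) ?_
        exact Submodule.sum_mem _ fun c _ =>
          Submodule.smul_mem _ _ (Submodule.subset_span ⟨Sum.inl _, rfl⟩)
  · cases r with
    | inl u =>
        exact Submodule.subset_span ⟨Sum.inl u, rfl⟩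
    | inr ju =>
        show LOmat σ nn aa β E n t k (Sum.inr ju) ∈ _
        have : LOmat σ nn aa β E n t k (Sum.inr ju) =
            LOmat σ nn aa β R n t k (Sum.inr ju)
              - ∑ c : Fin k, (⇑σ)^[(ju.2 : ℕ)] (M ju.1 c) •
                  LOmat σ nn aa β E n t k (Sum.inl ⟨(ju.2 : ℕ) + (c : ℕ), hidx ju.2 c⟩) := by
          rw [hdec ju, add_sub_cancel_right]
        rw [this]
        refine Submodule.sub_mem _ (Submodule.subset_span ⟨Sum.inr ju, rfl⟩) ?_
        refine Submodule.sum_mem _ fun c _ => Submodule.smul_mem _ _ ?_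
        rw [← hinl]
        exact Submodule.subset_span ⟨Sum.inl _, rfl⟩

end Stmt3
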